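/- Fix blocks B₁, …, B_D, let χ_M : Fin M → Fin D be a finite block sequence with finite Jacobi matrix J_N(χ_M) ∈ ℝ^{N×N}, and let χ_per : ℤ → Fin D be the M-periodic extension of χ_M (χ_per(i) = χ_M(i mod M)). Then every λ ∈ ℝ for which the matrix J_N(χ_M) − λI is singular satisfies λ ∈ σ(J₊(χ_per)) ∪ σ(J₋(χ_per)). -/

import Mathlib

set_option maxHeartbeats 1000000


noncomputable section

/-- A block: a nonempty finite list of triples `(v, ℓ, s)` of positive reals. -/
def Block : Type :=
  {L : List (ℝ × ℝ × ℝ) // L ≠ [] ∧ ∀ t ∈ L, 0 < t.1 ∧ 0 < t.2.1 ∧ 0 < t.2.2}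

/-- The single-resonator propagation matrix `P^λ_{ℓ,s,v}`. -/
def propMat (lam ℓ s v : ℝ) : Matrix (Fin 2) (Fin 2) ℝ :=
  !![1 - s * ℓ * lam / v ^ 2, s; -(ℓ * lam / v ^ 2), 1]

/-- Propagation matrix of a resonator triple `(v, ℓ, s)`. -/
def propOf (lam : ℝ) (t : ℝ × ℝ × ℝ) : Matrix (Fin 2) (Fin 2) ℝ :=
  propMat lam t.2.1 t.2.2 t.1

/-- The block propagation matrix `𝒫^λ_B = P^λ_{ℓ_L,s_L,v_L} ⋯ P^λ_{ℓ₁,s₁,v₁}`. -/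
def blockMat (lam : ℝ) (Bd : Block) : Matrix (Fin 2) (Fin 2) ℝ :=
  ((Bd.1.map (propOf lam)).reverse).prod

/-- `data` (with block-start indices `st`) is the bi-infinite concatenation of the
blocks `B (χ j)`. -/
def IsConcat {D : ℕ} (B : Fin D → Block) (χ : ℤ → Fin D)
    (data : ℤ → ℝ × ℝ × ℝ) (st : ℤ → ℤ) : Prop :=
  st 0 = 0 ∧ (∀ j : ℤ, st (j + 1) = st j + ((B (χ j)).1.length : ℤ)) ∧
    ∀ (j : ℤ) (k : ℕ) (hk : k < (B (χ j)).1.length),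
      data (st j + (k : ℤ)) = (B (χ j)).1.get ⟨k, hk⟩

/-- `ℓ²(ℤ)`. -/
abbrev Hint := lp (fun _ : ℤ => ℝ) 2
/-- `ℓ²(ℤ≥0)`. -/
abbrev Hnat := lp (fun _ : ℕ => ℝ) 2
/-- `ℓ²(ℤ<0)`. -/
abbrev Hneg := lp (fun _ : {i : ℤ // i < 0} => ℝ) 2

/-- The off-diagonal band `a(i) = −v_i v_{i+1}/(s_i √(ℓ_i ℓ_{i+1}))`,
with `data i = (v_i, ℓ_i, s_i)`. -/
def aSeq (data : ℤ → ℝ × ℝ × ℝ) (i : ℤ) : ℝ :=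
  -((data i).1 * (data (i + 1)).1) /
    ((data i).2.2 * Real.sqrt ((data i).2.1 * (data (i + 1)).2.1))

/-- The diagonal band `b(i) = (v_i²/ℓ_i)(1/s_{i−1} + 1/s_i)`. -/
def bSeq (data : ℤ → ℝ × ℝ × ℝ) (i : ℤ) : ℝ :=
  ((data i).1 ^ 2 / (data i).2.1) * (1 / (data (i - 1)).2.2 + 1 / (data i).2.2)

/-- `J` is the Jacobi operator on `ℓ²(ℤ)` with bands `a`, `b` built from `data`. -/
def IsJacobiOf (data : ℤ → ℝ × ℝ × ℝ) (J : Hint →L[ℝ] Hint) : Prop :=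
  ∀ (x : Hint) (i : ℤ),
    J x i = aSeq data (i - 1) * x (i - 1) + bSeq data i * x i + aSeq data i * x (i + 1)

/-- `Jp` is the positive semi-infinite Jacobi operator with corner entry
`b(0) = v₀²/(ℓ₀s₀)`. -/
def IsJacobiPlusOf (data : ℤ → ℝ × ℝ × ℝ) (Jp : Hnat →L[ℝ] Hnat) : Prop :=
  (∀ x : Hnat,
      Jp x 0 = (data 0).1 ^ 2 / ((data 0).2.1 * (data 0).2.2) * x 0 + aSeq data 0 * x 1) ∧
  (∀ (x : Hnat) (n : ℕ),
      Jp x (n + 1) = aSeq data (n : ℤ) * x n + bSeq data ((n : ℤ) + 1) * x (n + 1) +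
        aSeq data ((n : ℤ) + 1) * x (n + 2))

/-- `Jm` is the negative semi-infinite Jacobi operator with corner entry
`b(−1) = v₋₁²/(ℓ₋₁s₋₂)`. -/
def IsJacobiMinusOf (data : ℤ → ℝ × ℝ × ℝ) (Jm : Hneg →L[ℝ] Hneg) : Prop :=
  (∀ x : Hneg,
      Jm x ⟨-1, by norm_num⟩ =
        (data (-1)).1 ^ 2 / ((data (-1)).2.1 * (data (-2)).2.2) * x ⟨-1, by norm_num⟩ +
          aSeq data (-2) * x ⟨-2, by norm_num⟩) ∧
  (∀ (x : Hneg) (i : ℤ) (hi : i < -1),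
      Jm x ⟨i, by omega⟩ =
        aSeq data (i - 1) * x ⟨i - 1, by omega⟩ + bSeq data i * x ⟨i, by omega⟩ +
          aSeq data i * x ⟨i + 1, by omega⟩)

/-- The reflection-doubling of a semi-infinite sequence. -/
def reflDouble {D : ℕ} (χp : ℕ → Fin D) : ℤ → Fin D :=
  fun i => if 0 ≤ i then χp i.toNat else χp (-i - 1).toNat

/-- The `M`-periodic extension of a finite sequence. -/
def periodify {D : ℕ} (M : ℕ) (hM : 0 < M) (χM : Fin M → Fin D) : ℤ → Fin D :=
  fun i => χM ⟨(i % (M : ℤ)).toNat, by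
    have h1 : 0 ≤ i % (M : ℤ) := Int.emod_nonneg i (by exact_mod_cast hM.ne')
    have h2 : i % (M : ℤ) < (M : ℤ) := Int.emod_lt_of_pos i (by exact_mod_cast hM)
    omega⟩

/-- The finite `N×N` Jacobi matrix with bands from `data` and physical corner entries. -/
def finJacobi (data : ℤ → ℝ × ℝ × ℝ) (N : ℕ) : Matrix (Fin N) (Fin N) ℝ :=
  Matrix.of fun i j : Fin N =>
    if (i : ℕ) + 1 = (j : ℕ) then aSeq data ((i : ℕ) : ℤ)
    else if (j : ℕ) + 1 = (i : ℕ) then aSeq data ((j : ℕ) : ℤ)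
    else if i = j then
      (if (i : ℕ) = 0 then (data 0).1 ^ 2 / ((data 0).2.1 * (data 0).2.2)
       else if (i : ℕ) = N - 1 then
         (data ((i : ℕ) : ℤ)).1 ^ 2 /
           ((data ((i : ℕ) : ℤ)).2.1 * (data (((i : ℕ) : ℤ) - 1)).2.2)
       else bSeq data ((i : ℕ) : ℤ))
    else 0


noncomputable section

lemma mem_spectrum_of_forall {H : Type*} [NormedAddCommGroup H] [NormedSpace ℝ H]
    (T : H →L[ℝ] H) (lam : ℝ)
    (h : ∀ C : ℝ, 0 ≤ C → ∃ y : H, C * ‖lam • y - T y‖ < ‖y‖) :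
    lam ∈ spectrum ℝ T := by
  rw [spectrum.mem_iff]
  intro hu
  obtain ⟨S, hS⟩ := hu.exists_left_inv
  obtain ⟨y, hy⟩ := h ‖S‖ (norm_nonneg S)
  have h1 : (algebraMap ℝ (H →L[ℝ] H) lam - T) y = lam • y - T y := by
    simp [Algebra.algebraMap_eq_smul_one, ContinuousLinearMap.sub_apply]
  have h2 : S ((algebraMap ℝ (H →L[ℝ] H) lam - T) y) = y := by
    have := congrArg (fun A : H →L[ℝ] H => A y) hS
    simpa using this
  have h3 : ‖y‖ ≤ ‖S‖ * ‖lam • y - T y‖ := by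
    calc ‖y‖ = ‖S ((algebraMap ℝ (H →L[ℝ] H) lam - T) y)‖ := by rw [h2]
    _ ≤ ‖S‖ * ‖(algebraMap ℝ (H →L[ℝ] H) lam - T) y‖ := S.le_opNorm _
    _ = ‖S‖ * ‖lam • y - T y‖ := by rw [h1]
  exact absurd h3 (not_le.mpr hy)

open scoped ENNReal

lemma two_toReal : (2 : ℝ≥0∞).toReal = 2 := by norm_num

lemma norm_eq_sqrt_sum {α : Type*} [DecidableEq α] (s : Finset α) (x : α → ℝ) :
    ‖∑ n ∈ s, lp.single (E := fun _ : α => ℝ) 2 n (x n)‖ =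
      Real.sqrt (∑ n ∈ s, x n ^ 2) := by
  have h := lp.norm_sum_single (p := 2) (E := fun _ : α => ℝ) (by norm_num) x s
  rw [two_toReal] at h
  have h2 : ∀ n ∈ s, ‖x n‖ ^ (2:ℝ) = x n ^ 2 := by
    intro n _
    rw [Real.rpow_two, Real.norm_eq_abs, sq_abs]
  rw [Finset.sum_congr rfl h2] at h
  rw [← h, Real.rpow_two, Real.sqrt_sq (norm_nonneg _)]

lemma coord_sum_single {α : Type*} [DecidableEq α] (s : Finset α) (x : α → ℝ) (j : α) :
    (↑(∑ n ∈ s, lp.single (E := fun _ : α => ℝ) 2 n (x n)) : α → ℝ) j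
      = if j ∈ s then x j else 0 := by
  rw [lp.coeFn_sum, Finset.sum_apply]
  have h2 : ∀ n ∈ s, (↑(lp.single (E := fun _ : α => ℝ) 2 n (x n)) : α → ℝ) j
      = if j = n then x n else 0 := by
    intro n _
    rw [lp.single_apply]
    split
    · next h => subst h; simp
    · next h => simp [h]
  rw [Finset.sum_congr rfl h2, Finset.sum_ite_eq s j x]

lemma norm_single_double {α : Type*} [DecidableEq α] (i j : α) (c d : ℝ) :
    ‖(lp.single (E := fun _ : α => ℝ) 2 i c + lp.single (E := fun _ : α => ℝ) 2 j d)‖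
      ≤ |c| + |d| := by
  calc ‖(lp.single (E := fun _ : α => ℝ) 2 i c + lp.single (E := fun _ : α => ℝ) 2 j d)‖
      ≤ ‖(lp.single (E := fun _ : α => ℝ) 2 i c)‖ + ‖(lp.single (E := fun _ : α => ℝ) 2 j d)‖ :=
        norm_add_le _ _
    _ ≤ |c| + |d| := by
        rw [lp.norm_single (E := fun _ : α => ℝ) (p := 2) (by norm_num) i c,
          lp.norm_single (E := fun _ : α => ℝ) (p := 2) (by norm_num) j d]
        simp [Real.norm_eq_abs]

lemma single_coord {α : Type*} [DecidableEq α] (i : α) (c : ℝ) (k : α) :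
    (↑(lp.single (E := fun _ : α => ℝ) 2 i c) : α → ℝ) k = if k = i then c else 0 := by
  rw [lp.single_apply]
  split
  · next h => subst h; simp
  · next h => simp [h]

lemma coord_single_double {α : Type*} [DecidableEq α] (i j : α) (c d : ℝ) (k : α) :
    (↑(lp.single (E := fun _ : α => ℝ) 2 i c + lp.single (E := fun _ : α => ℝ) 2 j d) : α → ℝ) k
      = (if k = i then c else 0) + (if k = j then d else 0) := by
  rw [lp.coeFn_add, Pi.add_apply, single_coord, single_coord]

lemma jp_spec (data : ℤ → ℝ × ℝ × ℝ) (Jp : Hnat →L[ℝ] Hnat) (hJp : IsJacobiPlusOf data Jp)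
    (lam : ℝ) (x : ℕ → ℝ)
    (h0 : (data 0).1 ^ 2 / ((data 0).2.1 * (data 0).2.2) * x 0 + aSeq data 0 * x 1 = lam * x 0)
    (hrec : ∀ n : ℕ, aSeq data (n : ℤ) * x n + bSeq data ((n : ℤ) + 1) * x (n + 1) +
      aSeq data ((n : ℤ) + 1) * x (n + 2) = lam * x (n + 1))
    (hgrow : ∀ C : ℝ, 0 ≤ C → ∃ m : ℕ, 2 ≤ m ∧
      C * (|aSeq data ((m : ℤ) - 1)| * (|x m| + |x (m - 1)|)) <
        Real.sqrt (∑ n ∈ Finset.range m, x n ^ 2)) :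
    lam ∈ spectrum ℝ Jp := by
  apply mem_spectrum_of_forall
  intro C hC
  obtain ⟨m, hm2, hlt⟩ := hgrow C hC
  set y : Hnat := ∑ n ∈ Finset.range m, lp.single 2 n (x n) with hy
  have hycoord : ∀ j : ℕ, (y : ℕ → ℝ) j = if j < m then x j else 0 := by
    intro j
    rw [hy, coord_sum_single (Finset.range m) x j]
    simp [Finset.mem_range]
  refine ⟨y, ?_⟩
  have hrescoord : ∀ j : ℕ, (↑(lam • y - Jp y) : ℕ → ℝ) j =
      (↑(lp.single 2 (m-1) (aSeq data ((m : ℤ) - 1) * x m)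
        + lp.single 2 m (-(aSeq data ((m : ℤ) - 1) * x (m-1))) : Hnat) : ℕ → ℝ) j := by
    intro j
    have hcoesub : (↑(lam • y - Jp y) : ℕ → ℝ) j = lam * (y : ℕ → ℝ) j - (↑(Jp y) : ℕ → ℝ) j := by
      rw [lp.coeFn_sub, Pi.sub_apply, lp.coeFn_smul, Pi.smul_apply, smul_eq_mul]
    rw [hcoesub, coord_single_double]
    rcases j with _ | n
    · -- j = 0
      have e0 : (y : ℕ → ℝ) 0 = x 0 := by rw [hycoord]; exact if_pos (by omega)
      have e1 : (y : ℕ → ℝ) 1 = x 1 := by rw [hycoord]; exact if_pos (by omega)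
      rw [hJp.1 y, e0, e1, if_neg (show ¬(0 = m - 1) by omega), if_neg (show ¬(0 = m) by omega)]
      linear_combination -h0
    · have e0 : (y : ℕ → ℝ) n = if n < m then x n else 0 := hycoord n
      have e1 : (y : ℕ → ℝ) (n+1) = if n+1 < m then x (n+1) else 0 := hycoord (n+1)
      have e2 : (y : ℕ → ℝ) (n+2) = if n+2 < m then x (n+2) else 0 := hycoord (n+2)
      rw [hJp.2 y n]
      rcases lt_trichotomy (n+1) (m-1) with hcase | hcase | hcase
      · rw [e0, e1, e2, if_pos (show n < m by omega), if_pos (show n+1 < m by omega),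
          if_pos (show n+2 < m by omega),
          if_neg (show ¬(n+1 = m-1) by omega), if_neg (show ¬(n+1 = m) by omega)]
        linear_combination -hrec n
      · -- n+1 = m-1
        rw [e0, e1, e2, if_pos (show n < m by omega), if_pos (show n+1 < m by omega),
          if_neg (show ¬(n+2 < m) by omega),
          if_pos (show n+1 = m-1 by omega), if_neg (show ¬(n+1 = m) by omega),
          show ((m : ℤ) - 1) = (n : ℤ) + 1 by omega, show m = n + 2 by omega]
        linear_combination -hrec n
      · rcases Nat.eq_or_lt_of_le (show m ≤ n+1 by omega) with hcase2 | hcase2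
        · -- n+1 = m
          rw [e0, e1, e2, if_pos (show n < m by omega), if_neg (show ¬(n+1 < m) by omega),
            if_neg (show ¬(n+2 < m) by omega),
            if_neg (show ¬(n+1 = m-1) by omega), if_pos (show n+1 = m by omega),
            show ((m : ℤ) - 1) = (n : ℤ) by omega, show m - 1 = n by omega]
          ring
        · rw [e0, e1, e2, if_neg (show ¬(n < m) by omega), if_neg (show ¬(n+1 < m) by omega),
            if_neg (show ¬(n+2 < m) by omega),
            if_neg (show ¬(n+1 = m-1) by omega), if_neg (show ¬(n+1 = m) by omega)]
          ring
  have hres : (lam • y - Jp y) = (lp.single 2 (m-1) (aSeq data ((m : ℤ) - 1) * x m)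
        + lp.single 2 m (-(aSeq data ((m : ℤ) - 1) * x (m-1))) : Hnat) :=
    lp.ext (funext hrescoord)
  have hresnorm : ‖lam • y - Jp y‖ ≤ |aSeq data ((m : ℤ) - 1)| * (|x m| + |x (m-1)|) := by
    rw [hres]
    refine (norm_single_double _ _ _ _).trans ?_
    rw [abs_neg, abs_mul, abs_mul, mul_add]
  have hynorm : ‖y‖ = Real.sqrt (∑ n ∈ Finset.range m, x n ^ 2) :=
    norm_eq_sqrt_sum (Finset.range m) x
  calc C * ‖lam • y - Jp y‖ ≤ C * (|aSeq data ((m : ℤ) - 1)| * (|x m| + |x (m-1)|)) :=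
        mul_le_mul_of_nonneg_left hresnorm hC
    _ < Real.sqrt (∑ n ∈ Finset.range m, x n ^ 2) := hlt
    _ = ‖y‖ := hynorm.symm

abbrev Ineg := {i : ℤ // i < 0}

lemma jm_spec (data : ℤ → ℝ × ℝ × ℝ) (Jm : Hneg →L[ℝ] Hneg) (hJm : IsJacobiMinusOf data Jm)
    (lam : ℝ) (x : ℤ → ℝ)
    (h0m : (data (-1)).1 ^ 2 / ((data (-1)).2.1 * (data (-2)).2.2) * x (-1)
      + aSeq data (-2) * x (-2) = lam * x (-1))
    (hrec : ∀ i : ℤ, i < -1 → aSeq data (i - 1) * x (i - 1) + bSeq data i * x i +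
      aSeq data i * x (i + 1) = lam * x i)
    (hgrow : ∀ C : ℝ, 0 ≤ C → ∃ m : ℕ, 2 ≤ m ∧
      C * (|aSeq data (-(m : ℤ) - 1)| * (|x (-(m : ℤ) - 1)| + |x (-(m : ℤ))|)) <
        Real.sqrt (∑ k ∈ Finset.range m, x (-(k : ℤ) - 1) ^ 2)) :
    lam ∈ spectrum ℝ Jm := by
  apply mem_spectrum_of_forall
  intro C hC
  obtain ⟨m, hm2, hlt⟩ := hgrow C hC
  set f : ℕ → Ineg := fun k => ⟨-(k : ℤ) - 1, by omega⟩ with hf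
  have hfinj : ∀ k1 ∈ Finset.range m, ∀ k2 ∈ Finset.range m, f k1 = f k2 → k1 = k2 := by
    intro k1 _ k2 _ h
    have := congrArg Subtype.val h
    simp only [hf] at this
    omega
  set s : Finset Ineg := (Finset.range m).image f with hs
  set xneg : Ineg → ℝ := fun j => x j.1 with hxneg
  have hmem : ∀ j : Ineg, j ∈ s ↔ -(m : ℤ) ≤ j.1 := by
    rintro ⟨i, hi⟩
    simp only [hs, Finset.mem_image, Finset.mem_range]
    constructor
    · rintro ⟨k, hk, hfk⟩
      have := congrArg Subtype.val hfk
      simp only [hf] at this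
      omega
    · intro h
      refine ⟨(-i - 1).toNat, by omega, ?_⟩
      simp only [hf]
      exact Subtype.ext (by simp only; omega)
  set y : Hneg := ∑ n ∈ s, lp.single 2 n (xneg n) with hy
  have hycoord : ∀ j : Ineg, (y : Ineg → ℝ) j = if -(m : ℤ) ≤ j.1 then x j.1 else 0 := by
    intro j
    rw [hy, coord_sum_single s xneg j]
    by_cases h : -(m : ℤ) ≤ (j : ℤ)
    · rw [if_pos ((hmem j).mpr h), if_pos h]
    · rw [if_neg (fun hh => h ((hmem j).mp hh)), if_neg h]
  refine ⟨y, ?_⟩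
  set c1 : ℝ := aSeq data (-(m : ℤ) - 1) * x (-(m : ℤ) - 1) with hc1
  set c2 : ℝ := -(aSeq data (-(m : ℤ) - 1) * x (-(m : ℤ))) with hc2
  have hrescoord : ∀ j : Ineg, (↑(lam • y - Jm y) : Ineg → ℝ) j =
      (↑(lp.single 2 (⟨-(m : ℤ), by omega⟩ : Ineg) c1
        + lp.single 2 (⟨-(m : ℤ) - 1, by omega⟩ : Ineg) c2 : Hneg) : Ineg → ℝ) j := by
    rintro ⟨i, hi⟩
    have hcoesub : (↑(lam • y - Jm y) : Ineg → ℝ) ⟨i, hi⟩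
        = lam * (y : Ineg → ℝ) ⟨i, hi⟩ - (↑(Jm y) : Ineg → ℝ) ⟨i, hi⟩ := by
      rw [lp.coeFn_sub, Pi.sub_apply, lp.coeFn_smul, Pi.smul_apply, smul_eq_mul]
    rw [hcoesub, coord_single_double]
    simp only [Subtype.mk.injEq]
    rcases eq_or_lt_of_le (show i ≤ -1 by omega) with hcase0 | hcase0
    · -- i = -1
      subst hcase0
      have h1 : (⟨-1, hi⟩ : Ineg) = ⟨-1, by norm_num⟩ := rfl
      rw [h1, hJm.1 y]
      rw [hycoord ⟨-1, by norm_num⟩, hycoord ⟨-2, by norm_num⟩]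
      simp only
      rw [if_pos (show -(m : ℤ) ≤ -1 by omega), if_pos (show -(m : ℤ) ≤ -2 by omega),
        if_neg (show ¬((-1 : ℤ) = -(m : ℤ)) by omega),
        if_neg (show ¬((-1 : ℤ) = -(m : ℤ) - 1) by omega)]
      linear_combination -h0m
    · -- i < -1
      have h1 : (⟨i, hi⟩ : Ineg) = ⟨i, by omega⟩ := rfl
      rw [h1, hJm.2 y i hcase0]
      have e0 : (y : Ineg → ℝ) ⟨i - 1, by omega⟩ = if -(m : ℤ) ≤ i - 1 then x (i-1) else 0 :=
        hycoord _
      have e1 : (y : Ineg → ℝ) ⟨i, by omega⟩ = if -(m : ℤ) ≤ i then x i else 0 := hycoord _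
      have e2 : (y : Ineg → ℝ) ⟨i + 1, by omega⟩ = if -(m : ℤ) ≤ i + 1 then x (i+1) else 0 :=
        hycoord _
      rw [e0, e1, e2]
      rcases lt_trichotomy i (-(m:ℤ)) with hcase | hcase | hcase
      · rcases eq_or_lt_of_le (show i ≤ -(m:ℤ) - 1 by omega) with hc2' | hc2'
        · -- i = -m - 1
          rw [if_neg (show ¬(-(m : ℤ) ≤ i - 1) by omega),
            if_neg (show ¬(-(m : ℤ) ≤ i) by omega),
            if_pos (show -(m : ℤ) ≤ i + 1 by omega),
            if_neg (show ¬(i = -(m:ℤ)) by omega), if_pos hc2']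
          subst hc2'
          have hx : x (-(m:ℤ) - 1 + 1) = x (-(m:ℤ)) := congrArg x (by ring)
          rw [hc2, hx]
          ring
        · rw [if_neg (show ¬(-(m : ℤ) ≤ i - 1) by omega),
            if_neg (show ¬(-(m : ℤ) ≤ i) by omega),
            if_neg (show ¬(-(m : ℤ) ≤ i + 1) by omega),
            if_neg (show ¬(i = -(m:ℤ)) by omega), if_neg (show ¬(i = -(m:ℤ) - 1) by omega)]
          ring
      · -- i = -m
        rw [if_neg (show ¬(-(m : ℤ) ≤ i - 1) by omega),
          if_pos (show -(m : ℤ) ≤ i by omega),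
          if_pos (show -(m : ℤ) ≤ i + 1 by omega),
          if_pos hcase, if_neg (show ¬(i = -(m:ℤ) - 1) by omega)]
        subst hcase
        rw [hc1]
        linear_combination -hrec (-(m:ℤ)) hcase0
      · rw [if_pos (show -(m : ℤ) ≤ i - 1 by omega),
          if_pos (show -(m : ℤ) ≤ i by omega),
          if_pos (show -(m : ℤ) ≤ i + 1 by omega),
          if_neg (show ¬(i = -(m:ℤ)) by omega), if_neg (show ¬(i = -(m:ℤ) - 1) by omega)]
        linear_combination -hrec i hcase0
  have hres : (lam • y - Jm y) = (lp.single 2 (⟨-(m : ℤ), by omega⟩ : Ineg) c1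
        + lp.single 2 (⟨-(m : ℤ) - 1, by omega⟩ : Ineg) c2 : Hneg) :=
    lp.ext (funext hrescoord)
  have hresnorm : ‖lam • y - Jm y‖ ≤ |aSeq data (-(m : ℤ) - 1)|
      * (|x (-(m : ℤ) - 1)| + |x (-(m : ℤ))|) := by
    rw [hres]
    refine (norm_single_double _ _ _ _).trans ?_
    rw [hc1, hc2, abs_neg, abs_mul, abs_mul, mul_add]
  have hynorm : ‖y‖ = Real.sqrt (∑ k ∈ Finset.range m, x (-(k : ℤ) - 1) ^ 2) := by
    rw [hy, norm_eq_sqrt_sum s xneg, hs, Finset.sum_image hfinj]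
  calc C * ‖lam • y - Jm y‖
      ≤ C * (|aSeq data (-(m : ℤ) - 1)| * (|x (-(m : ℤ) - 1)| + |x (-(m : ℤ))|)) :=
        mul_le_mul_of_nonneg_left hresnorm hC
    _ < Real.sqrt (∑ k ∈ Finset.range m, x (-(k : ℤ) - 1) ^ 2) := hlt
    _ = ‖y‖ := hynorm.symm

section Concat

variable {D M : ℕ} (hM : 0 < M) {B : Fin D → Block} {χ : ℤ → Fin D}
  {data : ℤ → ℝ × ℝ × ℝ} {st : ℤ → ℤ}

lemma block_len_pos (d : Fin D) : 0 < (B d).1.length :=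
  List.length_pos_iff.mpr (B d).2.1

lemma concat_cover (hc : IsConcat B χ data st) :
    ∀ i : ℤ, ∃ (j : ℤ) (k : ℕ) (hk : k < (B (χ j)).1.length), i = st j + k := by
  obtain ⟨h0, hstep, -⟩ := hc
  have coverUp : ∀ n : ℕ, ∀ j i : ℤ, st j ≤ i → i < st j + n →
      ∃ (j' : ℤ) (k : ℕ) (hk : k < (B (χ j')).1.length), i = st j' + k := by
    intro n
    induction n with
    | zero => intro j i h1 h2; omega
    | succ n ih =>
      intro j i h1 h2
      by_cases hlt : i < st (j + 1)
      · refine ⟨j, (i - st j).toNat, ?_, by omega⟩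
        have := hstep j
        omega
      · have hlen := block_len_pos (B := B) (χ j)
        have := hstep j
        exact ih (j+1) i (by omega) (by omega)
  have coverDown : ∀ n : ℕ, ∀ j i : ℤ, st j - n ≤ i → i < st j →
      ∃ (j' : ℤ) (k : ℕ) (hk : k < (B (χ j')).1.length), i = st j' + k := by
    intro n
    induction n with
    | zero => intro j i h1 h2; omega
    | succ n ih =>
      intro j i h1 h2
      have hst : st j = st (j - 1) + ((B (χ (j-1))).1.length : ℤ) := by
        have := hstep (j - 1); rw [sub_add_cancel] at this; exact this
      by_cases hge : st (j - 1) ≤ i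
      · refine ⟨j - 1, (i - st (j-1)).toNat, ?_, by omega⟩
        omega
      · have hlen := block_len_pos (B := B) (χ (j - 1))
        exact ih (j-1) i (by omega) (by omega)
  intro i
  rcases le_or_gt 0 i with h | h
  · exact coverUp (i + 1).toNat 0 i (by omega) (by omega)
  · exact coverDown (-i).toNat 0 i (by omega) (by omega)

lemma concat_pos (hc : IsConcat B χ data st) (i : ℤ) :
    0 < (data i).1 ∧ 0 < (data i).2.1 ∧ 0 < (data i).2.2 := by
  obtain ⟨j, k, hk, rfl⟩ := concat_cover hc i
  rw [hc.2.2 j k hk]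
  exact (B (χ j)).2.2 _ (List.get_mem _ _)

lemma periodify_per {χM : Fin M → Fin D} (j : ℤ) :
    periodify M hM χM (j + M) = periodify M hM χM j := by
  have hmod : (j + (M:ℤ)) % M = j % M := by
    conv_lhs => rw [show j + (M:ℤ) = j + (M:ℤ) * 1 by ring]
    rw [Int.add_mul_emod_self_left]
  unfold periodify
  exact congrArg χM (Fin.ext (by simp only [hmod]))

lemma concat_stM {N : ℕ} {χM : Fin M → Fin D}
    (hc : IsConcat B (periodify M hM χM) data st) (hN : st (M : ℤ) = (N : ℤ)) :
    ∀ j : ℤ, st (j + M) = st j + N := by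
  have hchi : ∀ j : ℤ, periodify M hM χM (j + M) = periodify M hM χM j := periodify_per hM
  have key : ∀ j : ℤ, st (j + M) - st j = N := by
    intro j
    induction j using Int.induction_on with
    | zero => simpa [hc.1] using hN
    | succ j ih =>
      have h1 : st (j + 1 + M) = st (j + M) + ((B (periodify M hM χM (j + M))).1.length : ℤ) := by
        have := hc.2.1 (j + M)
        rw [show (j:ℤ) + (M:ℤ) + 1 = j + 1 + M by ring] at this
        exact this
      have h2 := hc.2.1 (j : ℤ)
      rw [hchi j] at h1
      omega
    | pred j ih =>
      have h1 : st (-j + M) = st (-j - 1 + M)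
          + ((B (periodify M hM χM (-j - 1 + M))).1.length : ℤ) := by
        have := hc.2.1 (-j - 1 + M)
        rw [show -(j:ℤ) - 1 + (M:ℤ) + 1 = -j + M by ring] at this
        exact this
      have h2 : st (-j : ℤ) = st (-j - 1) + ((B (periodify M hM χM (-j - 1))).1.length : ℤ) := by
        have := hc.2.1 (-(j:ℤ) - 1)
        rw [show -(j:ℤ) - 1 + 1 = -j by ring] at this
        exact this
      rw [hchi (-(j:ℤ) - 1)] at h1
      omega
  intro j
  have := key j
  omega

lemma concat_dataper {N : ℕ} {χM : Fin M → Fin D}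
    (hc : IsConcat B (periodify M hM χM) data st) (hN : st (M : ℤ) = (N : ℤ)) :
    ∀ i : ℤ, data (i + N) = data i := by
  intro i
  obtain ⟨j, k, hk, rfl⟩ := concat_cover hc i
  have hchi : periodify M hM χM (j + M) = periodify M hM χM j := periodify_per hM j
  have hk' : k < (B (periodify M hM χM (j + M))).1.length := by rw [hchi]; exact hk
  have h1 : st j + (k:ℤ) + (N:ℤ) = st (j + M) + (k:ℤ) := by
    rw [concat_stM hM hc hN j]; ring
  have hlist : (B (periodify M hM χM (j + M))).1 = (B (periodify M hM χM j)).1 := by rw [hchi]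
  rw [h1, hc.2.2 (j + M) k hk', hc.2.2 j k hk]
  exact List.get_of_eq hlist ⟨k, hk'⟩

lemma dataper_all {N : ℕ} {data : ℤ → ℝ × ℝ × ℝ} (hper : ∀ i : ℤ, data (i + N) = data i) :
    ∀ (t : ℤ) (i : ℤ), data (i + t * N) = data i := by
  intro t
  induction t using Int.induction_on with
  | zero => intro i; simp
  | succ t ih =>
    intro i
    rw [show i + ((t:ℤ)+1) * N = (i + t * N) + N by ring, hper, ih]
  | pred t ih =>
    intro i
    have h2 := ih i
    have h3 := hper (i + (-(t:ℤ) - 1) * N)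
    rw [show i + (-(t:ℤ) - 1) * N + N = i + -(t:ℤ) * N by ring] at h3
    rw [← h3]
    exact h2

lemma aSeq_per {N : ℕ} {data : ℤ → ℝ × ℝ × ℝ} (hper : ∀ i : ℤ, data (i + N) = data i)
    (t i : ℤ) : aSeq data (i + t * N) = aSeq data i := by
  unfold aSeq
  rw [dataper_all hper, show i + t * N + 1 = (i + 1) + t * N by ring, dataper_all hper]

lemma bSeq_per {N : ℕ} {data : ℤ → ℝ × ℝ × ℝ} (hper : ∀ i : ℤ, data (i + N) = data i)
    (t i : ℤ) : bSeq data (i + t * N) = bSeq data i := by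
  unfold bSeq
  rw [dataper_all hper, show i + t * N - 1 = (i - 1) + t * N by ring, dataper_all hper]

end Concat

section FinRows

variable {N : ℕ} {data : ℤ → ℝ × ℝ × ℝ}

def dgEntry (data : ℤ → ℝ × ℝ × ℝ) (N : ℕ) (i : Fin N) : ℝ :=
  if (i : ℕ) = 0 then (data 0).1 ^ 2 / ((data 0).2.1 * (data 0).2.2)
  else if (i : ℕ) = N - 1 then
    (data ((i : ℕ) : ℤ)).1 ^ 2 / ((data ((i : ℕ) : ℤ)).2.1 * (data (((i : ℕ) : ℤ) - 1)).2.2)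
  else bSeq data ((i : ℕ) : ℤ)

lemma finJacobi_decomp (i j : Fin N) :
    finJacobi data N i j =
      (if (i : ℕ) + 1 = (j : ℕ) then aSeq data ((i : ℕ) : ℤ) else 0)
      + (if (j : ℕ) + 1 = (i : ℕ) then aSeq data ((j : ℕ) : ℤ) else 0)
      + (if i = j then dgEntry data N i else 0) := by
  rcases i with ⟨iv, hiv⟩
  rcases j with ⟨jv, hjv⟩
  simp only [finJacobi, Matrix.of_apply, dgEntry, Fin.mk.injEq]
  split_ifs <;> (first | ring1 | (exfalso; omega))

lemma sum_succ_band (i : Fin N) (c : ℝ) (u : Fin N → ℝ) :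
    ∑ j : Fin N, (if (i : ℕ) + 1 = (j : ℕ) then c else 0) * u j =
      if h : (i : ℕ) + 1 < N then c * u ⟨(i : ℕ) + 1, h⟩ else 0 := by
  split
  · next h =>
    rw [Finset.sum_eq_single (⟨(i : ℕ) + 1, h⟩ : Fin N)]
    · rw [if_pos rfl]
    · intro b _ hb
      rw [if_neg fun hbad => hb (Fin.ext hbad.symm), zero_mul]
    · intro h'; exact absurd (Finset.mem_univ _) h'
  · next h =>
    apply Finset.sum_eq_zero
    intro b _
    have hb := b.isLt
    rw [if_neg (by omega), zero_mul]

lemma sum_pred_band (i : Fin N) (c : ℕ → ℝ) (u : Fin N → ℝ) :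
    ∑ j : Fin N, (if (j : ℕ) + 1 = (i : ℕ) then c (j : ℕ) else 0) * u j =
      if h : 0 < (i : ℕ) then c ((i : ℕ) - 1) * u ⟨(i : ℕ) - 1, by omega⟩ else 0 := by
  split
  · next h =>
    rw [Finset.sum_eq_single (⟨(i : ℕ) - 1, by omega⟩ : Fin N)]
    · rw [if_pos (show (i : ℕ) - 1 + 1 = (i : ℕ) by omega)]
    · intro b _ hb
      have hbv : (b : ℕ) ≠ (i : ℕ) - 1 := fun hh => hb (Fin.ext hh)
      rw [if_neg (by omega), zero_mul]
    · intro h'; exact absurd (Finset.mem_univ _) h'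
  · next h =>
    apply Finset.sum_eq_zero
    intro b _
    rw [if_neg (by omega), zero_mul]

lemma sum_diag_band (i : Fin N) (c : ℝ) (u : Fin N → ℝ) :
    ∑ j : Fin N, (if i = j then c else 0) * u j = c * u i := by
  rw [Finset.sum_eq_single i]
  · rw [if_pos rfl]
  · intro b _ hb
    rw [if_neg fun hbad => hb hbad.symm, zero_mul]
  · intro h'; exact absurd (Finset.mem_univ _) h'

lemma rows_exist (data : ℤ → ℝ × ℝ × ℝ) (N : ℕ) (lam : ℝ)
    (hsing : ¬ IsUnit (finJacobi data N - lam • (1 : Matrix (Fin N) (Fin N) ℝ))) :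
    ∃ u : Fin N → ℝ, u ≠ 0 ∧ ∀ i : Fin N,
      (if h : 0 < (i : ℕ) then aSeq data ((((i : ℕ) - 1 : ℕ)) : ℤ) * u ⟨(i : ℕ) - 1, by omega⟩ else 0)
      + dgEntry data N i * u i
      + (if h : (i : ℕ) + 1 < N then aSeq data ((i : ℕ) : ℤ) * u ⟨(i : ℕ) + 1, h⟩ else 0)
      = lam * u i := by
  have hdet : (finJacobi data N - lam • (1 : Matrix (Fin N) (Fin N) ℝ)).det = 0 := by
    by_contra h
    exact hsing ((Matrix.isUnit_iff_isUnit_det _).mpr (isUnit_iff_ne_zero.mpr h))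
  obtain ⟨u, hu0, hu⟩ := (Matrix.exists_mulVec_eq_zero_iff).mpr hdet
  refine ⟨u, hu0, fun i => ?_⟩
  have hrow : ∑ j : Fin N, finJacobi data N i j * u j = lam * u i := by
    have h1 := congrFun hu i
    rw [Matrix.sub_mulVec, Matrix.smul_mulVec, Matrix.one_mulVec] at h1
    have h2 : (finJacobi data N).mulVec u i - (lam • u) i = 0 := h1
    rw [Pi.smul_apply, smul_eq_mul, sub_eq_zero] at h2
    rw [← h2]
    rfl
  rw [← hrow]
  have hsplit : ∀ j : Fin N, finJacobi data N i j * u j =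
      (if (i : ℕ) + 1 = (j : ℕ) then aSeq data ((i : ℕ) : ℤ) else 0) * u j
      + (if (j : ℕ) + 1 = (i : ℕ) then aSeq data ((j : ℕ) : ℤ) else 0) * u j
      + (if i = j then dgEntry data N i else 0) * u j := by
    intro j
    rw [finJacobi_decomp]
    ring
  rw [Finset.sum_congr rfl (fun j _ => hsplit j), Finset.sum_add_distrib,
    Finset.sum_add_distrib, sum_succ_band, sum_diag_band,
    sum_pred_band i (fun k => aSeq data (k : ℤ)) u]
  split <;> ring

end FinRows

theorem stmt_17 (D M N : ℕ) (hM : 0 < M) (B : Fin D → Block) (χM : Fin M → Fin D)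
    (data : ℤ → ℝ × ℝ × ℝ) (st : ℤ → ℤ)
    (hconcat : IsConcat B (periodify M hM χM) data st)
    (hN : st (M : ℤ) = (N : ℤ))
    (Jp : Hnat →L[ℝ] Hnat) (hJp : IsJacobiPlusOf data Jp)
    (Jm : Hneg →L[ℝ] Hneg) (hJm : IsJacobiMinusOf data Jm)
    (lam : ℝ)
    (hsing : ¬ IsUnit (finJacobi data N - lam • (1 : Matrix (Fin N) (Fin N) ℝ))) :
    lam ∈ spectrum ℝ Jp ∨ lam ∈ spectrum ℝ Jm := by
  classical
  obtain ⟨u, hu0, hrows⟩ := rows_exist data N lam hsing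
  have hN0 : 0 < N := by
    rcases Nat.eq_zero_or_pos N with h | h
    · exfalso; apply hu0; funext i; exact absurd i.isLt (by omega)
    · exact h
  have hpos := concat_pos hconcat
  have hper := concat_dataper hM hconcat hN
  have ha_neg : ∀ i : ℤ, aSeq data i < 0 := by
    intro i
    have h1 := hpos i
    have h2 := hpos (i+1)
    have hs : 0 < Real.sqrt ((data i).2.1 * (data (i+1)).2.1) :=
      Real.sqrt_pos.mpr (mul_pos h1.2.1 h2.2.1)
    unfold aSeq
    apply div_neg_of_neg_of_pos
    · have := mul_pos h1.1 h2.1; linarith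
    · exact mul_pos h1.2.2 hs
  have ha_ne : ∀ i : ℤ, aSeq data i ≠ 0 := fun i => (ha_neg i).ne
  rcases eq_or_lt_of_le (Nat.succ_le_of_lt hN0) with hN1 | hN2
  · -- N = 1 case
    left
    have hd : ∀ i : ℤ, data i = data 0 := by
      have hone : ∀ i : ℤ, data (i + 1) = data i := by
        intro i
        have := hper i
        rwa [show ((N:ℤ)) = 1 by omega] at this
      intro i
      induction i using Int.induction_on with
      | zero => rfl
      | succ j ih => rw [hone j, ih]
      | pred j ih =>
        first
        | exact ih
        | (have h2 := hone (-(j:ℤ) - 1)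
           rw [show -(j:ℤ) - 1 + 1 = -(j:ℤ) by ring] at h2
           rw [← h2]
           exact ih)
    have hv0p : 0 < (data 0).1 := (hpos 0).1
    have hl0p : 0 < (data 0).2.1 := (hpos 0).2.1
    have hs0p : 0 < (data 0).2.2 := (hpos 0).2.2
    set i0 : Fin N := ⟨0, hN0⟩ with hi0def
    have hi0v : (i0 : ℕ) = 0 := rfl
    have hu00 : u i0 ≠ 0 := by
      intro h
      apply hu0
      funext i
      have hi := i.isLt
      have : i = i0 := by
        apply Fin.ext
        rw [hi0v]
        omega
      rw [this, h, Pi.zero_apply]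
    have hlam : lam = (data 0).1 ^ 2 / ((data 0).2.1 * (data 0).2.2) := by
      have h := hrows i0
      rw [dif_neg (show ¬(0 < (i0 : ℕ)) by omega),
        dif_neg (show ¬((i0 : ℕ) + 1 < N) by omega)] at h
      have hdg : dgEntry data N i0 = (data 0).1 ^ 2 / ((data 0).2.1 * (data 0).2.2) := by
        simp [dgEntry, hi0v]
      rw [hdg] at h
      have h2 : ((data 0).1 ^ 2 / ((data 0).2.1 * (data 0).2.2)) * u i0 = lam * u i0 := by
        linarith [h]
      rcases mul_eq_mul_right_iff.mp h2 with h3 | h3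
      · rw [h3]
      · exact absurd h3 hu00
    have haconst : ∀ i : ℤ, aSeq data i = -lam := by
      intro i
      unfold aSeq
      rw [hd i, hd (i+1), Real.sqrt_mul_self hl0p.le, hlam]
      field_simp
    have hbconst : ∀ i : ℤ, bSeq data i = 2 * lam := by
      intro i
      unfold bSeq
      rw [hd i, hd (i-1), hlam]
      field_simp
      ring
    set q : ℕ → ℝ := fun n =>
      if n % 6 = 0 then 1 else if n % 6 = 1 then 0 else if n % 6 = 2 then -1
      else if n % 6 = 3 then -1 else if n % 6 = 4 then 0 else 1 with hq
    have hqrec : ∀ n : ℕ, q (n + 2) = q (n + 1) - q n := by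
      intro n
      have h : n % 6 = 0 ∨ n % 6 = 1 ∨ n % 6 = 2 ∨ n % 6 = 3 ∨ n % 6 = 4 ∨ n % 6 = 5 := by omega
      rcases h with h|h|h|h|h|h
      · have e1 : (n+1) % 6 = 1 := by omega
        have e2 : (n+2) % 6 = 2 := by omega
        simp [hq, h, e1, e2]
      · have e1 : (n+1) % 6 = 2 := by omega
        have e2 : (n+2) % 6 = 3 := by omega
        simp [hq, h, e1, e2]
      · have e1 : (n+1) % 6 = 3 := by omega
        have e2 : (n+2) % 6 = 4 := by omega
        simp [hq, h, e1, e2]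
      · have e1 : (n+1) % 6 = 4 := by omega
        have e2 : (n+2) % 6 = 5 := by omega
        simp [hq, h, e1, e2]
      · have e1 : (n+1) % 6 = 5 := by omega
        have e2 : (n+2) % 6 = 0 := by omega
        simp [hq, h, e1, e2]
      · have e1 : (n+1) % 6 = 0 := by omega
        have e2 : (n+2) % 6 = 1 := by omega
        simp [hq, h, e1, e2]
    have hqbound : ∀ n : ℕ, |q n| ≤ 1 := by
      intro n
      have h : n % 6 = 0 ∨ n % 6 = 1 ∨ n % 6 = 2 ∨ n % 6 = 3 ∨ n % 6 = 4 ∨ n % 6 = 5 := by omega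
      rcases h with h|h|h|h|h|h <;> simp [hq, h] <;> norm_num
    have hq6 : ∀ k : ℕ, q (6 * k) = 1 := by
      intro k
      have h : (6 * k) % 6 = 0 := by omega
      simp [hq, h]
    apply jp_spec data Jp hJp lam q
    · -- corner
      have hq0 : q 0 = 1 := by norm_num [hq]
      have hq1 : q 1 = 0 := by norm_num [hq]
      rw [hq0, hq1, hlam]
      ring
    · intro n
      rw [haconst, haconst, hbconst, hqrec n]
      ring
    · intro C hC
      obtain ⟨K, hK⟩ := exists_nat_gt (max 1 ((C * (|lam| * 2)) ^ 2))
      have hK1 : 1 ≤ K := by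
        have := le_max_left 1 ((C * (|lam| * 2)) ^ 2)
        have h2 : (1:ℝ) < K := lt_of_le_of_lt this hK
        exact_mod_cast h2.le
      refine ⟨6 * K, by omega, ?_⟩
      have hbound : C * (|aSeq data (((6 * K : ℕ) : ℤ) - 1)| * (|q (6*K)| + |q (6*K - 1)|))
          ≤ C * (|lam| * 2) := by
        apply mul_le_mul_of_nonneg_left _ hC
        rw [haconst, abs_neg]
        apply mul_le_mul_of_nonneg_left _ (abs_nonneg lam)
        calc |q (6*K)| + |q (6*K-1)| ≤ 1 + 1 := add_le_add (hqbound _) (hqbound _)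
          _ = 2 := by norm_num
      have hsum : (K : ℝ) ≤ ∑ n ∈ Finset.range (6 * K), q n ^ 2 := by
        have hsub : (Finset.range K).image (fun k => 6 * k) ⊆ Finset.range (6 * K) := by
          intro a ha
          simp only [Finset.mem_image, Finset.mem_range] at ha
          obtain ⟨k, hk, rfl⟩ := ha
          simp only [Finset.mem_range]
          omega
        have hinj : ∀ k1 ∈ Finset.range K, ∀ k2 ∈ Finset.range K,
            6 * k1 = 6 * k2 → k1 = k2 := by intro _ _ _ _ h; omega
        calc (K : ℝ) = ∑ k ∈ Finset.range K, (1:ℝ) := by simp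
          _ = ∑ k ∈ Finset.range K, q (6 * k) ^ 2 := by
              apply Finset.sum_congr rfl
              intro k _
              rw [hq6 k]; norm_num
          _ = ∑ n ∈ (Finset.range K).image (fun k => 6 * k), q n ^ 2 := by
              rw [Finset.sum_image hinj]
          _ ≤ ∑ n ∈ Finset.range (6 * K), q n ^ 2 := by
              apply Finset.sum_le_sum_of_subset_of_nonneg hsub
              intro n _ _
              positivity
      calc C * (|aSeq data (((6 * K : ℕ) : ℤ) - 1)| * (|q (6*K)| + |q (6*K - 1)|))
          ≤ C * (|lam| * 2) := hbound
        _ < Real.sqrt K := by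
            have h1 : (C * (|lam| * 2)) ^ 2 < ((K:ℝ)) := lt_of_le_of_lt (le_max_right _ _) hK
            have h2 : (K:ℝ) = Real.sqrt K ^ 2 := (Real.sq_sqrt (by positivity)).symm
            rw [h2] at h1
            exact lt_of_pow_lt_pow_left₀ 2 (Real.sqrt_nonneg _) h1
        _ ≤ Real.sqrt (∑ n ∈ Finset.range (6 * K), q n ^ 2) := Real.sqrt_le_sqrt hsum
  · -- N ≥ 2 case
    have hN2 : 2 ≤ N := hN2
    have hNz : (N : ℤ) ≠ 0 := by exact_mod_cast hN0.ne'
    have hNzp : (0 : ℤ) < (N : ℤ) := by exact_mod_cast hN0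
    have hNlt : N - 1 < N := by omega
    have F0 : (data 0).1 ^ 2 / ((data 0).2.1 * (data 0).2.2) * u ⟨0, hN0⟩
        + aSeq data 0 * u ⟨1, hN2⟩ = lam * u ⟨0, hN0⟩ := by
      have h := hrows ⟨0, hN0⟩
      rw [dif_neg (show ¬(0 < (0:ℕ)) by omega), dif_pos (show (0:ℕ) + 1 < N from hN2)] at h
      simp only [dgEntry, if_true] at h
      simp only [Nat.cast_zero, zero_add] at h
      exact h
    have hN2lt : N - 2 < N := by omega
    have FN : aSeq data ((N - 2 : ℕ) : ℤ) * u ⟨N - 2, hN2lt⟩ +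
        (data ((N - 1 : ℕ) : ℤ)).1 ^ 2 /
          ((data ((N - 1 : ℕ) : ℤ)).2.1 * (data (((N - 1 : ℕ) : ℤ) - 1)).2.2) * u ⟨N - 1, hNlt⟩
        = lam * u ⟨N - 1, hNlt⟩ := by
      have h := hrows ⟨N - 1, hNlt⟩
      rw [dif_pos (show 0 < N - 1 by omega), dif_neg (show ¬(N - 1 + 1 < N) by omega)] at h
      simp only [dgEntry, if_true] at h
      rw [if_neg (show ¬(N - 1 = 0) by omega)] at h
      simp only [add_zero] at h
      exact h
    have hrowk : ∀ (k : ℕ) (hk : k < N) (hk0 : 0 < k) (hk1 : k + 1 < N),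
        aSeq data ((k - 1 : ℕ) : ℤ) * u ⟨k - 1, Nat.lt_of_le_of_lt (Nat.sub_le k 1) hk⟩
          + bSeq data (k : ℤ) * u ⟨k, hk⟩ +
          aSeq data (k : ℤ) * u ⟨k + 1, hk1⟩ = lam * u ⟨k, hk⟩ := by
      intro k hk hk0 hk1
      have h := hrows ⟨k, hk⟩
      rw [dif_pos (show 0 < k from hk0), dif_pos (show k + 1 < N from hk1)] at h
      simp only [dgEntry] at h
      rw [if_neg (show ¬(k = 0) by omega), if_neg (show ¬(k = N - 1) by omega)] at h
      exact h
    have hu0ne : u ⟨0, hN0⟩ ≠ 0 := by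
      intro hz
      apply hu0
      have hzero : ∀ k, ∀ hk : k < N, u ⟨k, hk⟩ = 0 := by
        intro k
        induction k using Nat.strong_induction_on with
        | _ k ih =>
          intro hk
          match k, hk with
          | 0, hk => exact hz
          | 1, hk =>
            have h := F0
            rw [hz] at h
            have h2 : aSeq data 0 * u ⟨1, hN2⟩ = 0 := by linarith
            rcases mul_eq_zero.mp h2 with h3 | h3
            · exact absurd h3 (ha_ne 0)
            · exact h3
          | (k+2), hk =>
            have hrk := hrowk (k+1) (by omega) (by omega) (by omega)
            simp only [Nat.add_sub_cancel] at hrk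
            rw [ih k (by omega) (by omega), ih (k+1) (by omega) (by omega)] at hrk
            have h2 : aSeq data ((k+1 : ℕ) : ℤ) * u ⟨k + 1 + 1, by omega⟩ = 0 := by linarith
            rcases mul_eq_zero.mp h2 with h3 | h3
            · exact absurd h3 (ha_ne _)
            · exact h3
      funext i
      rw [Pi.zero_apply]
      exact hzero i.1 i.2
    have huNne : u ⟨N - 1, hNlt⟩ ≠ 0 := by
      intro hz
      apply hu0
      have hdown : ∀ j, ∀ m, ∀ hm : m < N, m + j = N - 1 → u ⟨m, hm⟩ = 0 := by
        intro j
        induction j using Nat.strong_induction_on with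
        | _ j ih =>
          intro m hm hmj
          match j, hmj with
          | 0, hmj =>
            have : (⟨m, hm⟩ : Fin N) = ⟨N - 1, hNlt⟩ := by
              apply Fin.ext
              show m = N - 1
              omega
            rw [this]
            exact hz
          | 1, hmj =>
            have h := FN
            rw [hz] at h
            have h2 : aSeq data ((N - 2 : ℕ) : ℤ) * u ⟨N - 2, hN2lt⟩ = 0 := by linarith
            have : (⟨m, hm⟩ : Fin N) = ⟨N - 2, hN2lt⟩ := by
              apply Fin.ext
              show m = N - 2
              omega
            rw [this]
            rcases mul_eq_zero.mp h2 with h3 | h3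
            · exact absurd h3 (ha_ne _)
            · exact h3
          | (j+2), hmj =>
            have hrk := hrowk (m+1) (by omega) (by omega) (by omega)
            simp only [Nat.add_sub_cancel] at hrk
            rw [ih (j+1) (by omega) (m+1) (by omega) (by omega),
              ih j (by omega) (m+2) (by omega) (by omega)] at hrk
            have h2 : aSeq data ((m : ℕ) : ℤ) * u ⟨m, hm⟩ = 0 := by
              linarith
            rcases mul_eq_zero.mp h2 with h3 | h3
            · exact absurd h3 (ha_ne _)
            · exact h3
      funext i
      rw [Pi.zero_apply]
      exact hdown (N - 1 - i.1) i.1 i.2 (by have := i.2; omega)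
    -- abbreviations
    have hdN : data ((N : ℤ) - 1 + 1) = data 0 := by
      have h := hper 0
      rw [zero_add] at h
      rw [show (N : ℤ) - 1 + 1 = (N : ℤ) by ring]
      exact h
    have hvNp : 0 < (data ((N:ℤ) - 1)).1 := (hpos _).1
    have hlNp : 0 < (data ((N:ℤ) - 1)).2.1 := (hpos _).2.1
    have hsNp : 0 < (data ((N:ℤ) - 1)).2.2 := (hpos _).2.2
    have hv0p : 0 < (data 0).1 := (hpos 0).1
    have hl0p : 0 < (data 0).2.1 := (hpos 0).2.1
    have hs0p : 0 < (data 0).2.2 := (hpos 0).2.2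
    have hcNpos : 0 < (data ((N:ℤ) - 1)).1 ^ 2 / ((data ((N:ℤ) - 1)).2.1 * (data ((N:ℤ) - 1)).2.2) := by positivity
    set μ : ℝ := ((data ((N:ℤ) - 1)).1 ^ 2 / ((data ((N:ℤ) - 1)).2.1 * (data ((N:ℤ) - 1)).2.2))
        * u ⟨N - 1, hNlt⟩ / (-(aSeq data ((N:ℤ) - 1)) * u ⟨0, hN0⟩) with hμdef
    have haNne : aSeq data ((N:ℤ) - 1) ≠ 0 := ha_ne _
    have hμ0 : μ ≠ 0 := by
      rw [hμdef]
      exact div_ne_zero (mul_ne_zero hcNpos.ne' huNne)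
        (mul_ne_zero (neg_ne_zero.mpr haNne) hu0ne)
    have K1 : (data ((N:ℤ) - 1)).1 ^ 2 / ((data ((N:ℤ) - 1)).2.1 * (data ((N:ℤ) - 1)).2.2)
        * u ⟨N - 1, hNlt⟩ + aSeq data ((N:ℤ) - 1) * (μ * u ⟨0, hN0⟩) = 0 := by
      rw [hμdef]
      field_simp
      ring
    have haform : aSeq data ((N:ℤ) - 1) = -((data ((N:ℤ) - 1)).1 * (data 0).1) /
        ((data ((N:ℤ) - 1)).2.2 * Real.sqrt ((data ((N:ℤ) - 1)).2.1 * (data 0).2.1)) := by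
      unfold aSeq
      rw [hdN]
    have hsq : Real.sqrt ((data ((N:ℤ) - 1)).2.1 * (data 0).2.1) ^ 2
        = (data ((N:ℤ) - 1)).2.1 * (data 0).2.1 :=
      Real.sq_sqrt (mul_nonneg hlNp.le hl0p.le)
    have hsqpos : 0 < Real.sqrt ((data ((N:ℤ) - 1)).2.1 * (data 0).2.1) :=
      Real.sqrt_pos.mpr (mul_pos hlNp hl0p)
    have ha2 : aSeq data ((N:ℤ) - 1) ^ 2 =
        (data 0).1 ^ 2 / ((data 0).2.1 * (data ((N:ℤ) - 1)).2.2) *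
          ((data ((N:ℤ) - 1)).1 ^ 2 / ((data ((N:ℤ) - 1)).2.1 * (data ((N:ℤ) - 1)).2.2)) := by
      rw [haform, div_pow, neg_sq, mul_pow, mul_pow, hsq]
      field_simp
    have K2 : (data 0).1 ^ 2 / ((data 0).2.1 * (data ((N:ℤ) - 1)).2.2) * (μ * u ⟨0, hN0⟩)
        + aSeq data ((N:ℤ) - 1) * u ⟨N - 1, hNlt⟩ = 0 := by
      have K2' : ((data ((N:ℤ) - 1)).1 ^ 2 / ((data ((N:ℤ) - 1)).2.1 * (data ((N:ℤ) - 1)).2.2))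
          * ((data 0).1 ^ 2 / ((data 0).2.1 * (data ((N:ℤ) - 1)).2.2) * (μ * u ⟨0, hN0⟩)
            + aSeq data ((N:ℤ) - 1) * u ⟨N - 1, hNlt⟩) = 0 := by
        linear_combination aSeq data ((N:ℤ) - 1) * K1 - (μ * u ⟨0, hN0⟩) * ha2
      rcases mul_eq_zero.mp K2' with h3 | h3
      · exact absurd h3 hcNpos.ne'
      · exact h3
    -- the modulated extension x
    have hmodpf : ∀ i : ℤ, (i % (N : ℤ)).toNat < N := by
      intro i
      have h1 := Int.emod_nonneg i hNz
      have h2 := Int.emod_lt_of_pos i hNzp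
      omega
    set x : ℤ → ℝ := fun i => μ ^ (i / (N : ℤ)) * u ⟨(i % (N : ℤ)).toNat, hmodpf i⟩ with hxdef
    have xval : ∀ (k : ℤ) (r : ℕ) (hr : r < N), x (k * N + r) = μ ^ k * u ⟨r, hr⟩ := by
      intro k r hr
      have h1 : (k * N + r) % N = r := by
        rw [show k * (N:ℤ) + r = r + N * k by ring, Int.add_mul_emod_self_left,
          Int.emod_eq_of_lt (by omega) (by exact_mod_cast hr)]
      have h2 : (k * N + r) / N = k := by
        rw [show k * (N:ℤ) + r = r + N * k by ring, Int.add_mul_ediv_left _ _ hNz,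
          Int.ediv_eq_zero_of_lt (by omega) (by exact_mod_cast hr), zero_add]
      rw [hxdef]
      simp only
      rw [h2]
      congr 1
      exact congrArg u (Fin.ext (by simp [h1]))
    have xshift : ∀ i : ℤ, x (i + N) = μ * x i := by
      intro i
      have hrep : i = (i / (N:ℤ)) * N + ((i % (N:ℤ)).toNat : ℤ) := by
        have h2 := Int.emod_nonneg i hNz
        calc i = N * (i / N) + i % N := (Int.mul_ediv_add_emod i N).symm
          _ = (i / (N:ℤ)) * N + ((i % (N:ℤ)).toNat : ℤ) := by
              rw [Int.toNat_of_nonneg h2]; ring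
      have h3 : x i = μ ^ (i / (N:ℤ)) * u ⟨(i % (N:ℤ)).toNat, hmodpf i⟩ := by rw [hxdef]
      rw [hrep, show (i / (N:ℤ)) * N + ((i % (N:ℤ)).toNat : ℤ) + N
          = (i / (N:ℤ) + 1) * N + ((i % (N:ℤ)).toNat : ℤ) by ring,
        xval _ _ (hmodpf i), xval _ _ (hmodpf i), zpow_add_one₀ hμ0]
      ring
    -- point values
    have hx0 : x 0 = u ⟨0, hN0⟩ := by
      have h := xval 0 0 hN0
      rw [show (0:ℤ) * N + ((0:ℕ):ℤ) = 0 by norm_num, zpow_zero, one_mul] at h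
      exact h
    have hx1 : x 1 = u ⟨1, hN2⟩ := by
      have h := xval 0 1 hN2
      rw [show (0:ℤ) * N + ((1:ℕ):ℤ) = 1 by norm_num, zpow_zero, one_mul] at h
      exact h
    have hxm1 : x (-1) = μ⁻¹ * u ⟨N - 1, hNlt⟩ := by
      have h := xval (-1) (N-1) hNlt
      rw [show (-1:ℤ) * N + ((N-1:ℕ):ℤ) = -1 by omega, zpow_neg_one] at h
      exact h
    have hxm2 : x (-2) = μ⁻¹ * u ⟨N - 2, hN2lt⟩ := by
      have h := xval (-1) (N-2) hN2lt
      rw [show (-1:ℤ) * N + ((N-2:ℕ):ℤ) = -2 by omega, zpow_neg_one] at h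
      exact h
    have FN' : aSeq data ((N - 2 : ℕ) : ℤ) * u ⟨N - 2, hN2lt⟩ +
        (data ((N:ℤ) - 1)).1 ^ 2 /
          ((data ((N:ℤ) - 1)).2.1 * (data ((N - 2 : ℕ) : ℤ)).2.2) * u ⟨N - 1, hNlt⟩
        = lam * u ⟨N - 1, hNlt⟩ := by
      have h := FN
      rw [show ((N - 1 : ℕ) : ℤ) = (N:ℤ) - 1 by omega,
        show (N:ℤ) - 1 - 1 = ((N - 2 : ℕ) : ℤ) by omega] at h
      exact h
    have haper : ∀ i : ℤ, aSeq data (i + N) = aSeq data i := by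
      intro i
      have h := aSeq_per hper 1 i
      rwa [one_mul] at h
    have hbper : ∀ i : ℤ, bSeq data (i + N) = bSeq data i := by
      intro i
      have h := bSeq_per hper 1 i
      rwa [one_mul] at h
    have hPshift : ∀ i : ℤ,
        (aSeq data (i + N - 1) * x (i + N - 1) + bSeq data (i + N) * x (i + N)
          + aSeq data (i + N) * x (i + N + 1) = lam * x (i + N)) ↔
        (aSeq data (i - 1) * x (i - 1) + bSeq data i * x i
          + aSeq data i * x (i + 1) = lam * x i) := by
      intro i
      rw [show i + (N:ℤ) - 1 = (i - 1) + N by ring]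
      rw [haper (i-1), xshift (i-1), hbper i, xshift i, haper i,
        show i + (N:ℤ) + 1 = (i + 1) + N by ring, xshift (i+1)]
      constructor
      · intro h
        apply mul_left_cancel₀ hμ0
        linear_combination h
      · intro h
        linear_combination μ * h
    have hbase : ∀ (r : ℕ), r < N →
        aSeq data ((r:ℤ) - 1) * x ((r:ℤ) - 1) + bSeq data (r:ℤ) * x (r:ℤ)
          + aSeq data (r:ℤ) * x ((r:ℤ) + 1) = lam * x (r:ℤ) := by
      intro r hr
      have hxr : x (r:ℤ) = u ⟨r, hr⟩ := by
        have h := xval 0 r hr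
        rw [show (0:ℤ) * N + (r:ℤ) = (r:ℤ) by ring, zpow_zero, one_mul] at h
        exact h
      rcases Nat.eq_zero_or_pos r with hr0 | hrpos
      · subst hr0
        simp only [Nat.cast_zero, zero_sub, zero_add]
        have ham1 : aSeq data (-1) = aSeq data ((N:ℤ) - 1) := by
          have h := aSeq_per hper 1 (-1)
          rw [show (-1 : ℤ) + 1 * N = (N:ℤ) - 1 by ring] at h
          exact h.symm
        have hdm1 : data (-1 : ℤ) = data ((N:ℤ) - 1) := by
          have h := hper (-1)
          rw [show (-1:ℤ) + N = (N:ℤ) - 1 by ring] at h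
          exact h.symm
        have hb0 : bSeq data 0 = (data 0).1 ^ 2 / (data 0).2.1 *
            (1 / (data ((N:ℤ) - 1)).2.2 + 1 / (data 0).2.2) := by
          unfold bSeq
          rw [show (0:ℤ) - 1 = -1 by norm_num, hdm1]
        rw [ham1, hb0, hxm1, hx1]
        rw [show x 0 = u ⟨0, hN0⟩ from hx0]
        have hμinv : μ⁻¹ * μ = 1 := inv_mul_cancel₀ hμ0
        linear_combination F0 + μ⁻¹ * K2 -
          ((data 0).1 ^ 2 / ((data 0).2.1 * (data ((N:ℤ) - 1)).2.2) * u ⟨0, hN0⟩) * hμinv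
      · have hxrm : x ((r:ℤ) - 1) = u ⟨r - 1, by omega⟩ := by
          have h := xval 0 (r-1) (by omega)
          rw [show (0:ℤ) * N + ((r - 1 : ℕ):ℤ) = (r:ℤ) - 1 by omega, zpow_zero, one_mul] at h
          exact h
        rcases Nat.lt_or_ge (r+1) N with hrtop | hrtop
        · have hxrp : x ((r:ℤ) + 1) = u ⟨r + 1, hrtop⟩ := by
            have h := xval 0 (r+1) hrtop
            rw [show (0:ℤ) * N + ((r + 1 : ℕ):ℤ) = (r:ℤ) + 1 by omega, zpow_zero, one_mul] at h
            exact h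
          have hrk := hrowk r hr hrpos hrtop
          rw [hxrm, hxr, hxrp]
          rw [show ((r:ℤ) - 1) = ((r - 1 : ℕ) : ℤ) by omega]
          exact hrk
        · have hrN : r = N - 1 := by omega
          have hxrp : x ((r:ℤ) + 1) = μ * u ⟨0, hN0⟩ := by
            have h := xval 1 0 hN0
            rw [show (1:ℤ) * N + ((0:ℕ):ℤ) = (N:ℤ) by norm_num, zpow_one] at h
            rw [show (r:ℤ) + 1 = (N:ℤ) by omega]
            exact h
          rw [hxrm, hxr, hxrp]
          have e1 : u ⟨r - 1, by omega⟩ = u ⟨N - 2, hN2lt⟩ := by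
            apply congrArg u
            apply Fin.ext
            show r - 1 = N - 2
            omega
          have e2 : u ⟨r, hr⟩ = u ⟨N - 1, hNlt⟩ := by
            apply congrArg u
            apply Fin.ext
            show r = N - 1
            omega
          have har1 : aSeq data ((r:ℤ) - 1) = aSeq data ((N - 2 : ℕ) : ℤ) := by
            rw [show (r:ℤ) - 1 = ((N - 2 : ℕ) : ℤ) by omega]
          have har : aSeq data (r:ℤ) = aSeq data ((N:ℤ) - 1) := by
            rw [show (r:ℤ) = (N:ℤ) - 1 by omega]
          have hbr : bSeq data (r:ℤ) = (data ((N:ℤ) - 1)).1 ^ 2 / (data ((N:ℤ) - 1)).2.1 *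
              (1 / (data ((N - 2 : ℕ) : ℤ)).2.2 + 1 / (data ((N:ℤ) - 1)).2.2) := by
            unfold bSeq
            rw [show (r:ℤ) = (N:ℤ) - 1 by omega, show (N:ℤ) - 1 - 1 = ((N - 2 : ℕ) : ℤ) by omega]
          rw [e1, e2, har1, har, hbr]
          linear_combination FN' + K1
    have RECall : ∀ i : ℤ, aSeq data (i - 1) * x (i - 1) + bSeq data i * x i
        + aSeq data i * x (i + 1) = lam * x i := by
      have hkr : ∀ (k : ℤ) (r : ℕ), r < N →
          aSeq data ((r:ℤ) + k * N - 1) * x ((r:ℤ) + k * N - 1)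
            + bSeq data ((r:ℤ) + k * N) * x ((r:ℤ) + k * N)
            + aSeq data ((r:ℤ) + k * N) * x ((r:ℤ) + k * N + 1) = lam * x ((r:ℤ) + k * N) := by
        intro k
        induction k using Int.induction_on with
        | zero =>
          intro r hr
          rw [show (r:ℤ) + 0 * N = (r:ℤ) by ring]
          exact hbase r hr
        | succ k ih =>
          intro r hr
          have h := (hPshift ((r:ℤ) + k * N)).mpr (ih r hr)
          rw [show (r:ℤ) + ((k:ℤ) + 1) * N = (r:ℤ) + (k:ℤ) * N + N by ring]
          exact h
        | pred k ih =>
          intro r hr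
          have h := ih r hr
          rw [show (r:ℤ) + (-(k:ℤ)) * N = ((r:ℤ) + (-(k:ℤ) - 1) * N) + N by ring] at h
          exact (hPshift ((r:ℤ) + (-(k:ℤ) - 1) * N)).mp h
      intro i
      have h2 := Int.emod_nonneg i hNz
      have hrep : i = (((i % (N:ℤ)).toNat : ℕ) : ℤ) + (i / N) * N := by
        calc i = N * (i / N) + i % N := (Int.mul_ediv_add_emod i N).symm
          _ = (((i % (N:ℤ)).toNat : ℕ) : ℤ) + (i / N) * N := by
              rw [Int.toNat_of_nonneg h2]; ring
      have h := hkr (i / (N:ℤ)) ((i % (N:ℤ)).toNat) (hmodpf i)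
      rwa [← hrep] at h
    have hcornerP : (data 0).1 ^ 2 / ((data 0).2.1 * (data 0).2.2) * x 0 + aSeq data 0 * x 1
        = lam * x 0 := by
      rw [hx0, hx1]
      exact F0
    have hcornerM : (data (-1)).1 ^ 2 / ((data (-1)).2.1 * (data (-2)).2.2) * x (-1)
        + aSeq data (-2) * x (-2) = lam * x (-1) := by
      have hdm1 : data (-1 : ℤ) = data ((N:ℤ) - 1) := by
        have h := hper (-1)
        rw [show (-1:ℤ) + N = (N:ℤ) - 1 by ring] at h
        exact h.symm
      have hdm2 : data (-2 : ℤ) = data ((N - 2 : ℕ) : ℤ) := by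
        have h := hper (-2)
        rw [show (-2:ℤ) + N = ((N - 2 : ℕ) : ℤ) by omega] at h
        exact h.symm
      have ham2 : aSeq data (-2) = aSeq data ((N - 2 : ℕ) : ℤ) := by
        have h := aSeq_per hper 1 (-2)
        rw [show (-2 : ℤ) + 1 * N = ((N - 2 : ℕ) : ℤ) by omega] at h
        exact h.symm
      rw [hdm1, hdm2, ham2, hxm1, hxm2]
      linear_combination μ⁻¹ * FN'
    -- final case split
    set A : ℝ := |aSeq data ((N:ℤ) - 1)| * (|u ⟨0, hN0⟩| + |u ⟨N - 1, hNlt⟩|) with hAdef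
    have hu0abs : 0 < |u ⟨0, hN0⟩| := abs_pos.mpr hu0ne
    have hApos : 0 < A := by
      apply mul_pos (abs_pos.mpr haNne)
      exact add_pos_of_pos_of_nonneg hu0abs (abs_nonneg _)
    have hμsq1 : ∀ w : ℝ, w ≠ 0 → |w| ≤ 1 → w ^ 2 ≤ 1 := by
      intro w _ hw
      rw [← sq_abs]
      exact pow_le_one₀ (abs_nonneg w) hw
    rcases le_or_gt |μ| 1 with hμle | hμgt
    · -- |μ| ≤ 1 : use Jp
      left
      apply jp_spec data Jp hJp lam (fun n => x ((n : ℕ) : ℤ))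
      · exact hcornerP
      · intro n
        have h := RECall ((n:ℤ) + 1)
        rw [show (n:ℤ) + 1 - 1 = (n:ℤ) by ring, show (n:ℤ) + 1 + 1 = (n:ℤ) + 2 by ring] at h
        push_cast
        exact h
      · intro C hC
        obtain ⟨K, hK⟩ := exists_nat_gt (max 1 ((C * A / |u ⟨0, hN0⟩|) ^ 2))
        have hK1 : 1 ≤ K := by
          have h1 := le_max_left 1 ((C * A / |u ⟨0, hN0⟩|) ^ 2)
          have h2 : (1:ℝ) < K := lt_of_le_of_lt h1 hK
          exact_mod_cast h2.le
        have hm2 : 2 ≤ K * N := by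
          calc 2 ≤ N := hN2
            _ = 1 * N := (one_mul N).symm
            _ ≤ K * N := Nat.mul_le_mul_right N hK1
        refine ⟨K * N, hm2, ?_⟩
        set t : ℝ := |μ| ^ (K - 1) with htdef
        have htpos : 0 < t := pow_pos (abs_pos.mpr hμ0) _
        have hxKN : x ((K * N : ℕ) : ℤ) = μ ^ (K : ℤ) * u ⟨0, hN0⟩ := by
          have h := xval (K : ℤ) 0 hN0
          rw [show (K:ℤ) * N + ((0:ℕ):ℤ) = (((K * N : ℕ)) : ℤ) by push_cast; ring] at h
          exact h
        have hxKN1 : x ((K * N - 1 : ℕ) : ℤ) = μ ^ ((K : ℤ) - 1) * u ⟨N - 1, hNlt⟩ := by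
          have h := xval ((K:ℤ) - 1) (N - 1) hNlt
          rw [show ((K:ℤ) - 1) * N + ((N - 1 : ℕ):ℤ) = (((K * N - 1 : ℕ)) : ℤ) by
            push_cast [Nat.cast_sub (show 1 ≤ K * N by omega), Nat.cast_sub (show 1 ≤ N by omega)]
            ring] at h
          exact h
        have haKN : aSeq data (((K * N : ℕ) : ℤ) - 1) = aSeq data ((N:ℤ) - 1) := by
          rw [show ((K * N : ℕ) : ℤ) - 1 = ((N:ℤ) - 1) + ((K:ℤ) - 1) * N by push_cast; ring,
            aSeq_per hper]
        have habs1 : |x ((K * N : ℕ) : ℤ)| ≤ t * |u ⟨0, hN0⟩| := by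
          rw [hxKN, abs_mul, zpow_natCast, abs_pow]
          apply mul_le_mul_of_nonneg_right _ (abs_nonneg _)
          exact pow_le_pow_of_le_one (abs_nonneg μ) hμle (by omega)
        have habs2 : |x ((K * N - 1 : ℕ) : ℤ)| = t * |u ⟨N - 1, hNlt⟩| := by
          rw [hxKN1, abs_mul, show (K:ℤ) - 1 = ((K - 1 : ℕ) : ℤ) by omega, zpow_natCast, abs_pow]
        have hresb : |aSeq data (((K * N : ℕ) : ℤ) - 1)|
            * (|x ((K * N : ℕ) : ℤ)| + |x ((K * N - 1 : ℕ) : ℤ)|) ≤ A * t := by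
          rw [haKN, hAdef]
          calc |aSeq data ((N:ℤ) - 1)| * (|x ((K * N : ℕ) : ℤ)| + |x ((K * N - 1 : ℕ) : ℤ)|)
              ≤ |aSeq data ((N:ℤ) - 1)| * (t * |u ⟨0, hN0⟩| + t * |u ⟨N - 1, hNlt⟩|) := by
                apply mul_le_mul_of_nonneg_left _ (abs_nonneg _)
                exact add_le_add habs1 habs2.le
            _ = |aSeq data ((N:ℤ) - 1)| * (|u ⟨0, hN0⟩| + |u ⟨N - 1, hNlt⟩|) * t := by ring
        have hsum : (K:ℝ) * (t * |u ⟨0, hN0⟩|) ^ 2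
            ≤ ∑ n ∈ Finset.range (K * N), (x ((n : ℕ) : ℤ)) ^ 2 := by
          have hterm : ∀ k, k < K → (t * |u ⟨0, hN0⟩|) ^ 2 ≤ (x ((k * N : ℕ) : ℤ)) ^ 2 := by
            intro k hk
            have hx : x ((k * N : ℕ) : ℤ) = μ ^ (k : ℤ) * u ⟨0, hN0⟩ := by
              have h := xval (k : ℤ) 0 hN0
              rw [show (k:ℤ) * N + ((0:ℕ):ℤ) = (((k * N : ℕ)) : ℤ) by push_cast; ring] at h
              exact h
            have e1 : (t * |u ⟨0, hN0⟩|) ^ 2 = (μ ^ 2) ^ (K - 1) * u ⟨0, hN0⟩ ^ 2 := by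
              rw [mul_pow, htdef, ← pow_mul, mul_comm (K-1) 2, pow_mul, sq_abs, sq_abs]
            have e2 : (μ ^ (k:ℤ) * u ⟨0, hN0⟩) ^ 2 = (μ ^ 2) ^ k * u ⟨0, hN0⟩ ^ 2 := by
              rw [mul_pow, zpow_natCast, ← pow_mul, mul_comm k 2, pow_mul]
            rw [hx, e1, e2]
            apply mul_le_mul_of_nonneg_right _ (sq_nonneg _)
            exact pow_le_pow_of_le_one (sq_nonneg μ) (hμsq1 μ hμ0 hμle) (by omega)
          have hinj : ∀ k1 ∈ Finset.range K, ∀ k2 ∈ Finset.range K,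
              k1 * N = k2 * N → k1 = k2 := by
            intro k1 _ k2 _ h
            exact Nat.eq_of_mul_eq_mul_right hN0 h
          have hsub : (Finset.range K).image (fun k => k * N) ⊆ Finset.range (K * N) := by
            intro a ha
            simp only [Finset.mem_image, Finset.mem_range] at ha ⊢
            obtain ⟨k, hk, rfl⟩ := ha
            exact (Nat.mul_lt_mul_right hN0).mpr hk
          calc (K:ℝ) * (t * |u ⟨0, hN0⟩|) ^ 2
              = ∑ _k ∈ Finset.range K, (t * |u ⟨0, hN0⟩|) ^ 2 := by
                rw [Finset.sum_const, Finset.card_range, nsmul_eq_mul]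
            _ ≤ ∑ k ∈ Finset.range K, (x ((k * N : ℕ) : ℤ)) ^ 2 :=
                Finset.sum_le_sum (fun k hk => hterm k (Finset.mem_range.mp hk))
            _ = ∑ n ∈ (Finset.range K).image (fun k => k * N), (x ((n : ℕ) : ℤ)) ^ 2 := by
                rw [Finset.sum_image hinj]
            _ ≤ ∑ n ∈ Finset.range (K * N), (x ((n : ℕ) : ℤ)) ^ 2 :=
                Finset.sum_le_sum_of_subset_of_nonneg hsub (fun n _ _ => sq_nonneg _)
        have hlt2 : C * A / |u ⟨0, hN0⟩| < Real.sqrt K := by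
          have h1 : (C * A / |u ⟨0, hN0⟩|) ^ 2 < (K:ℝ) := lt_of_le_of_lt (le_max_right _ _) hK
          have h2 : (K:ℝ) = Real.sqrt K ^ 2 := (Real.sq_sqrt (by positivity)).symm
          rw [h2] at h1
          exact lt_of_pow_lt_pow_left₀ 2 (Real.sqrt_nonneg _) h1
        calc C * (|aSeq data (((K * N : ℕ) : ℤ) - 1)|
              * (|x ((K * N : ℕ) : ℤ)| + |x ((K * N - 1 : ℕ) : ℤ)|))
            ≤ C * (A * t) := mul_le_mul_of_nonneg_left hresb hC
          _ = (C * A / |u ⟨0, hN0⟩|) * (t * |u ⟨0, hN0⟩|) := by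
              field_simp
          _ < Real.sqrt K * (t * |u ⟨0, hN0⟩|) := by
              apply mul_lt_mul_of_pos_right hlt2
              positivity
          _ = Real.sqrt ((K:ℝ) * (t * |u ⟨0, hN0⟩|) ^ 2) := by
              rw [Real.sqrt_mul (by positivity), Real.sqrt_sq (by positivity)]
          _ ≤ Real.sqrt (∑ n ∈ Finset.range (K * N), (x ((n : ℕ) : ℤ)) ^ 2) :=
              Real.sqrt_le_sqrt hsum
    · -- |μ| > 1 : use Jm
      right
      apply jm_spec data Jm hJm lam x
      · exact hcornerM
      · exact fun i _ => RECall i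
      · intro C hC
        set w : ℝ := μ⁻¹ with hwdef
        have hw0 : w ≠ 0 := inv_ne_zero hμ0
        have hwle : |w| ≤ 1 := by
          rw [hwdef, abs_inv]
          rw [inv_le_one_iff₀]
          right
          exact hμgt.le
        obtain ⟨K, hK⟩ := exists_nat_gt (max 1 ((C * A / |u ⟨0, hN0⟩|) ^ 2))
        have hK1 : 1 ≤ K := by
          have h1 := le_max_left 1 ((C * A / |u ⟨0, hN0⟩|) ^ 2)
          have h2 : (1:ℝ) < K := lt_of_le_of_lt h1 hK
          exact_mod_cast h2.le
        have hm2 : 2 ≤ K * N := by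
          calc 2 ≤ N := hN2
            _ = 1 * N := (one_mul N).symm
            _ ≤ K * N := Nat.mul_le_mul_right N hK1
        refine ⟨K * N, hm2, ?_⟩
        set t : ℝ := |w| ^ K with htdef
        have htpos : 0 < t := pow_pos (abs_pos.mpr hw0) _
        have hzw : ∀ j : ℕ, μ ^ (-(j:ℤ)) = w ^ j := by
          intro j
          rw [zpow_neg, zpow_natCast, hwdef, inv_pow]
        have hxm' : x (-((K * N : ℕ) : ℤ)) = w ^ K * u ⟨0, hN0⟩ := by
          have h := xval (-(K : ℤ)) 0 hN0
          rw [show (-(K:ℤ)) * N + ((0:ℕ):ℤ) = -(((K * N : ℕ)) : ℤ) by push_cast; ring] at h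
          rw [h, hzw K]
        have hxm1' : x (-((K * N : ℕ) : ℤ) - 1) = w ^ (K + 1) * u ⟨N - 1, hNlt⟩ := by
          have h := xval (-(K:ℤ) - 1) (N - 1) hNlt
          rw [show (-(K:ℤ) - 1) * N + ((N - 1 : ℕ):ℤ) = -(((K * N : ℕ)) : ℤ) - 1 by
            push_cast [Nat.cast_sub (show 1 ≤ N by omega)]
            ring] at h
          rw [h, show (-(K:ℤ) - 1) = -((K + 1 : ℕ) : ℤ) by push_cast; ring, hzw (K+1)]
        have haKN : aSeq data (-((K * N : ℕ) : ℤ) - 1) = aSeq data ((N:ℤ) - 1) := by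
          rw [show -((K * N : ℕ) : ℤ) - 1 = ((N:ℤ) - 1) + (-(K:ℤ) - 1) * N by push_cast; ring,
            aSeq_per hper]
        have habs1 : |x (-((K * N : ℕ) : ℤ))| = t * |u ⟨0, hN0⟩| := by
          rw [hxm', abs_mul, abs_pow]
        have habs2 : |x (-((K * N : ℕ) : ℤ) - 1)| ≤ t * |u ⟨N - 1, hNlt⟩| := by
          rw [hxm1', abs_mul, abs_pow]
          apply mul_le_mul_of_nonneg_right _ (abs_nonneg _)
          exact pow_le_pow_of_le_one (abs_nonneg w) hwle (by omega)
        have hresb : |aSeq data (-((K * N : ℕ) : ℤ) - 1)|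
            * (|x (-((K * N : ℕ) : ℤ) - 1)| + |x (-((K * N : ℕ) : ℤ))|) ≤ A * t := by
          rw [haKN, hAdef]
          calc |aSeq data ((N:ℤ) - 1)|
              * (|x (-((K * N : ℕ) : ℤ) - 1)| + |x (-((K * N : ℕ) : ℤ))|)
              ≤ |aSeq data ((N:ℤ) - 1)| * (t * |u ⟨N - 1, hNlt⟩| + t * |u ⟨0, hN0⟩|) := by
                apply mul_le_mul_of_nonneg_left _ (abs_nonneg _)
                exact add_le_add habs2 habs1.le
            _ = |aSeq data ((N:ℤ) - 1)| * (|u ⟨0, hN0⟩| + |u ⟨N - 1, hNlt⟩|) * t := by ring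
        have hsum : (K:ℝ) * (t * |u ⟨0, hN0⟩|) ^ 2
            ≤ ∑ k ∈ Finset.range (K * N), (x (-((k : ℕ) : ℤ) - 1)) ^ 2 := by
          have hterm : ∀ j, j < K →
              (t * |u ⟨0, hN0⟩|) ^ 2 ≤ (x (-(((j + 1) * N - 1 : ℕ) : ℤ) - 1)) ^ 2 := by
            intro j hj
            have hx : x (-(((j + 1) * N - 1 : ℕ) : ℤ) - 1) = w ^ (j + 1) * u ⟨0, hN0⟩ := by
              have h := xval (-(j:ℤ) - 1) 0 hN0
              rw [show (-(j:ℤ) - 1) * N + ((0:ℕ):ℤ) = -((((j + 1) * N - 1 : ℕ)) : ℤ) - 1 by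
                push_cast [Nat.cast_sub (show 1 ≤ (j+1) * N from Nat.mul_pos (Nat.succ_pos _) hN0)]
                ring] at h
              rw [h, show (-(j:ℤ) - 1) = -((j + 1 : ℕ) : ℤ) by push_cast; ring, hzw (j+1)]
            have e1 : (t * |u ⟨0, hN0⟩|) ^ 2 = (w ^ 2) ^ K * u ⟨0, hN0⟩ ^ 2 := by
              rw [mul_pow, htdef, ← pow_mul, mul_comm K 2, pow_mul, sq_abs, sq_abs]
            have e2 : (w ^ (j + 1) * u ⟨0, hN0⟩) ^ 2 = (w ^ 2) ^ (j + 1) * u ⟨0, hN0⟩ ^ 2 := by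
              rw [mul_pow, ← pow_mul, mul_comm (j+1) 2, pow_mul]
            rw [hx, e1, e2]
            apply mul_le_mul_of_nonneg_right _ (sq_nonneg _)
            exact pow_le_pow_of_le_one (sq_nonneg w) (hμsq1 w hw0 hwle) (by omega)
          have hinj : ∀ k1 ∈ Finset.range K, ∀ k2 ∈ Finset.range K,
              (k1 + 1) * N - 1 = (k2 + 1) * N - 1 → k1 = k2 := by
            intro k1 _ k2 _ h
            have h1 : 1 ≤ (k1 + 1) * N := Nat.mul_pos (Nat.succ_pos _) hN0
            have h2 : 1 ≤ (k2 + 1) * N := Nat.mul_pos (Nat.succ_pos _) hN0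
            have h3 : (k1 + 1) * N = (k2 + 1) * N := by omega
            have h4 := Nat.eq_of_mul_eq_mul_right hN0 h3
            omega
          have hsub : (Finset.range K).image (fun j => (j + 1) * N - 1)
              ⊆ Finset.range (K * N) := by
            intro a ha
            simp only [Finset.mem_image, Finset.mem_range] at ha ⊢
            obtain ⟨j, hj, rfl⟩ := ha
            have h1 : (j + 1) * N ≤ K * N := Nat.mul_le_mul_right N (by omega)
            have h2 : 1 ≤ (j + 1) * N := Nat.mul_pos (Nat.succ_pos _) hN0
            omega
          calc (K:ℝ) * (t * |u ⟨0, hN0⟩|) ^ 2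
              = ∑ _j ∈ Finset.range K, (t * |u ⟨0, hN0⟩|) ^ 2 := by
                rw [Finset.sum_const, Finset.card_range, nsmul_eq_mul]
            _ ≤ ∑ j ∈ Finset.range K, (x (-((((j + 1) * N - 1 : ℕ)) : ℤ) - 1)) ^ 2 :=
                Finset.sum_le_sum (fun j hj => hterm j (Finset.mem_range.mp hj))
            _ = ∑ k ∈ (Finset.range K).image (fun j => (j + 1) * N - 1),
                  (x (-((k : ℕ) : ℤ) - 1)) ^ 2 := by rw [Finset.sum_image hinj]
            _ ≤ ∑ k ∈ Finset.range (K * N), (x (-((k : ℕ) : ℤ) - 1)) ^ 2 :=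
                Finset.sum_le_sum_of_subset_of_nonneg hsub (fun n _ _ => sq_nonneg _)
        have hlt2 : C * A / |u ⟨0, hN0⟩| < Real.sqrt K := by
          have h1 : (C * A / |u ⟨0, hN0⟩|) ^ 2 < (K:ℝ) := lt_of_le_of_lt (le_max_right _ _) hK
          have h2 : (K:ℝ) = Real.sqrt K ^ 2 := (Real.sq_sqrt (by positivity)).symm
          rw [h2] at h1
          exact lt_of_pow_lt_pow_left₀ 2 (Real.sqrt_nonneg _) h1
        calc C * (|aSeq data (-((K * N : ℕ) : ℤ) - 1)|
              * (|x (-((K * N : ℕ) : ℤ) - 1)| + |x (-((K * N : ℕ) : ℤ))|))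
            ≤ C * (A * t) := mul_le_mul_of_nonneg_left hresb hC
          _ = (C * A / |u ⟨0, hN0⟩|) * (t * |u ⟨0, hN0⟩|) := by
              field_simp
          _ < Real.sqrt K * (t * |u ⟨0, hN0⟩|) := by
              apply mul_lt_mul_of_pos_right hlt2
              positivity
          _ = Real.sqrt ((K:ℝ) * (t * |u ⟨0, hN0⟩|) ^ 2) := by
              rw [Real.sqrt_mul (by positivity), Real.sqrt_sq (by positivity)]
          _ ≤ Real.sqrt (∑ k ∈ Finset.range (K * N), (x (-((k : ℕ) : ℤ) - 1)) ^ 2) :=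
              Real.sqrt_le_sqrt hsum
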